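/- Let ρ1 ∈ D_{n1} and ρ2 ∈ D_{n2} be density matrices. There exists ρ ∈ S(ρ1,ρ2) with rank(ρ) = 1 if and only if ρ1 and ρ2 are isospectral, i.e., they have the same nonzero eigenvalues counting multiplicities. -/

import Mathlib

set_option maxHeartbeats 1000000

open Matrix Finset
open scoped ComplexOrder
open Polynomial

/-- Partial trace over the first subsystem: `tr_1(ρ) = Σ_j ρ_{jj} ∈ M_{n2}`. -/
noncomputable def trace1 {n1 n2 : ℕ} (ρ : Matrix (Fin n1 × Fin n2) (Fin n1 × Fin n2) ℂ) :
    Matrix (Fin n2) (Fin n2) ℂ :=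
  Matrix.of fun i j => ∑ k : Fin n1, ρ (k, i) (k, j)

/-- Partial trace over the second subsystem: `tr_2(ρ) = (tr ρ_{ij})_{ij} ∈ M_{n1}`. -/
noncomputable def trace2 {n1 n2 : ℕ} (ρ : Matrix (Fin n1 × Fin n2) (Fin n1 × Fin n2) ℂ) :
    Matrix (Fin n1) (Fin n1) ℂ :=
  Matrix.of fun i j => ∑ k : Fin n2, ρ (i, k) (j, k)

section generic
variable {K : Type} [Field K] (φ : Polynomial ℂ →+* K)

lemma map_charpoly {m : ℕ} (Q : Matrix (Fin m) (Fin m) ℂ) :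
    φ Q.charpoly = det ((φ X) • (1 : Matrix (Fin m) (Fin m) K) - Q.map (φ.comp C)) := by
  rw [Matrix.charpoly, RingHom.map_det]
  congr 1
  ext i j
  by_cases h : i = j
  · subst h
    simp [charmatrix_apply_eq, Matrix.smul_apply, Matrix.one_apply, Matrix.map_apply]
  · simp [charmatrix_apply_ne _ _ _ h, Matrix.smul_apply, Matrix.one_apply_ne h,
      Matrix.map_apply]

lemma charpoly_mul_comm_generic {a b : ℕ} (hφ : Function.Injective φ) (hx : φ X ≠ 0)
    (M : Matrix (Fin a) (Fin b) ℂ) (N : Matrix (Fin b) (Fin a) ℂ) :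
    X ^ b * (M * N).charpoly = X ^ a * (N * M).charpoly := by
  apply hφ
  set x : K := φ X with hxdef
  set B : Matrix (Fin a) (Fin b) K := M.map (φ.comp C) with hB
  set Cm : Matrix (Fin b) (Fin a) K := N.map (φ.comp C) with hC
  have hMN : (M * N).map (φ.comp C) = B * Cm := Matrix.map_mul
  have hNM : (N * M).map (φ.comp C) = Cm * B := Matrix.map_mul
  letI : Invertible (x • (1 : Matrix (Fin a) (Fin a) K)) :=
    ⟨x⁻¹ • (1 : Matrix (Fin a) (Fin a) K),
      by rw [smul_mul_smul_comm, inv_mul_cancel₀ hx, one_mul, one_smul],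
      by rw [smul_mul_smul_comm, mul_inv_cancel₀ hx, one_mul, one_smul]⟩
  have hinv : ⅟ (x • (1 : Matrix (Fin a) (Fin a) K)) = x⁻¹ • 1 := rfl
  letI : Invertible (1 : Matrix (Fin b) (Fin b) K) := invertibleOne
  have h1 : (fromBlocks (x • (1 : Matrix (Fin a) (Fin a) K)) B Cm 1).det
      = det (x • (1 : Matrix (Fin a) (Fin a) K) - B * Cm) := by
    rw [det_fromBlocks₂₂, invOf_one, Matrix.mul_one, det_one, one_mul]
  have h2 : (fromBlocks (x • (1 : Matrix (Fin a) (Fin a) K)) B Cm 1).det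
      = x ^ a * det ((1 : Matrix (Fin b) (Fin b) K) - x⁻¹ • (Cm * B)) := by
    rw [det_fromBlocks₁₁, hinv, det_smul, det_one, mul_one, Fintype.card_fin]
    congr 2
    rw [Matrix.mul_smul, Matrix.mul_one, Matrix.smul_mul]
  have h3 : x ^ b * det ((1 : Matrix (Fin b) (Fin b) K) - x⁻¹ • (Cm * B))
      = det (x • (1 : Matrix (Fin b) (Fin b) K) - Cm * B) := by
    have e : x • ((1 : Matrix (Fin b) (Fin b) K) - x⁻¹ • (Cm * B))
        = x • (1 : Matrix (Fin b) (Fin b) K) - Cm * B := by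
      rw [smul_sub, smul_smul, mul_inv_cancel₀ hx, one_smul]
    rw [← e, det_smul, Fintype.card_fin]
  calc φ (X ^ b * (M * N).charpoly)
      = x ^ b * det (x • (1 : Matrix (Fin a) (Fin a) K) - B * Cm) := by
        rw [_root_.map_mul, map_pow, map_charpoly, hMN, hxdef]
    _ = x ^ b * (x ^ a * det ((1 : Matrix (Fin b) (Fin b) K) - x⁻¹ • (Cm * B))) := by
        rw [← h1, h2]
    _ = x ^ a * (x ^ b * det ((1 : Matrix (Fin b) (Fin b) K) - x⁻¹ • (Cm * B))) := by ring
    _ = φ (X ^ a * (N * M).charpoly) := by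
        rw [h3, _root_.map_mul, map_pow, map_charpoly, hNM, hxdef]

end generic

lemma charpoly_mul_comm_rect {a b : ℕ} (M : Matrix (Fin a) (Fin b) ℂ)
    (N : Matrix (Fin b) (Fin a) ℂ) :
    X ^ b * (M * N).charpoly = X ^ a * (N * M).charpoly := by
  have hinj : Function.Injective (algebraMap (Polynomial ℂ) (RatFunc ℂ)) :=
    IsFractionRing.injective _ _
  have hx : algebraMap (Polynomial ℂ) (RatFunc ℂ) X ≠ 0 := by
    intro h
    exact X_ne_zero (hinj (h.trans (map_zero _).symm))
  exact charpoly_mul_comm_generic (algebraMap _ _) hinj hx M N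

lemma charpoly_mul_comm' {n : ℕ} (P Q : Matrix (Fin n) (Fin n) ℂ) :
    (P * Q).charpoly = (Q * P).charpoly :=
  mul_left_cancel₀ (pow_ne_zero n (X_ne_zero : (X : Polynomial ℂ) ≠ 0))
    (charpoly_mul_comm_rect P Q)

section spectral
variable {m' : Type*} [Fintype m'] [DecidableEq m'] {A : Matrix m' m' ℂ}

lemma orth_cols (hA : A.IsHermitian) (i j : m') :
    ∑ c, (starRingEnd ℂ) ((hA.eigenvectorUnitary : Matrix m' m' ℂ) c i) *
      (hA.eigenvectorUnitary : Matrix m' m' ℂ) c j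
      = if i = j then 1 else 0 := by
  have h : (star (hA.eigenvectorUnitary : Matrix m' m' ℂ)) *
      (hA.eigenvectorUnitary : Matrix m' m' ℂ) = 1 :=
    mem_unitaryGroup_iff'.mp hA.eigenvectorUnitary.2
  have h2 := congrFun (congrFun h i) j
  simpa [Matrix.mul_apply, Matrix.star_apply, Matrix.one_apply, RCLike.star_def] using h2

lemma spectral_sum (hA : A.IsHermitian) (i j : m') :
    A i j = ∑ k, (hA.eigenvalues k : ℂ) *
      ((hA.eigenvectorUnitary : Matrix m' m' ℂ) i k *
       (starRingEnd ℂ) ((hA.eigenvectorUnitary : Matrix m' m' ℂ) j k)) := by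
  conv_lhs => rw [hA.spectral_theorem, Unitary.conjStarAlgAut_apply]
  rw [Matrix.mul_apply]
  refine Finset.sum_congr rfl fun k _ => ?_
  have hcast : ∀ r : ℝ, (RCLike.ofReal r : ℂ) = (r : ℂ) := fun r => rfl
  simp only [Matrix.mul_diagonal, Matrix.star_apply, Function.comp_apply, RCLike.star_def, hcast]
  ring

lemma trace_eq_sum_eigs (hA : A.IsHermitian) : A.trace = ∑ i, (hA.eigenvalues i : ℂ) := by
  rw [Matrix.trace]
  unfold Matrix.diag
  simp_rw [spectral_sum hA]
  rw [Finset.sum_comm]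
  refine Finset.sum_congr rfl fun k _ => ?_
  rw [← Finset.mul_sum]
  have h := orth_cols hA k k
  simp only [if_true, eq_self_iff_true] at h
  simp at h
  have : ∑ c, (hA.eigenvectorUnitary : Matrix m' m' ℂ) c k *
      (starRingEnd ℂ) ((hA.eigenvectorUnitary : Matrix m' m' ℂ) c k) = 1 := by
    rw [← h]; exact Finset.sum_congr rfl fun c _ => mul_comm _ _
  rw [this, mul_one]

end spectral

section spectralFin
variable {n : ℕ} {A : Matrix (Fin n) (Fin n) ℂ}

lemma charpoly_hermitian (hA : A.IsHermitian) :
    A.charpoly = (((univ : Finset (Fin n)).val.map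
      (fun i => (hA.eigenvalues i : ℂ))).map (fun r => X - C r)).prod := by
  have hU : (star (hA.eigenvectorUnitary : Matrix (Fin n) (Fin n) ℂ)) *
      (hA.eigenvectorUnitary : Matrix (Fin n) (Fin n) ℂ) = 1 :=
    mem_unitaryGroup_iff'.mp hA.eigenvectorUnitary.2
  have h1 : A.charpoly
      = (diagonal (RCLike.ofReal ∘ hA.eigenvalues) : Matrix (Fin n) (Fin n) ℂ).charpoly := by
    conv_lhs => rw [hA.spectral_theorem, Unitary.conjStarAlgAut_apply]
    rw [mul_assoc, charpoly_mul_comm', mul_assoc, hU, mul_one]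
  rw [h1]
  have h2 : (diagonal (RCLike.ofReal ∘ hA.eigenvalues) : Matrix (Fin n) (Fin n) ℂ).charpoly
      = ∏ i : Fin n, (X - C (hA.eigenvalues i : ℂ)) := by
    rw [Matrix.charpoly]
    have : charmatrix (diagonal (RCLike.ofReal ∘ hA.eigenvalues) : Matrix (Fin n) (Fin n) ℂ)
        = diagonal (fun i => X - C (hA.eigenvalues i : ℂ)) := by
      ext i j
      by_cases h : i = j
      · subst h
        have hcast : ∀ r : ℝ, (RCLike.ofReal r : ℂ) = (r : ℂ) := fun r => rfl
        simp [charmatrix_apply_eq, hcast]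
      · simp [charmatrix_apply_ne _ _ _ h, diagonal_apply_ne _ h]
    rw [this, det_diagonal]
  rw [h2, Finset.prod]
  rw [Multiset.map_map]
  rfl

lemma roots_charpoly_hermitian (hA : A.IsHermitian) :
    A.charpoly.roots = (univ : Finset (Fin n)).val.map (fun i => (hA.eigenvalues i : ℂ)) := by
  rw [charpoly_hermitian hA, roots_multiset_prod_X_sub_C]

lemma filter_roots_eq (hA : A.IsHermitian) :
    Multiset.map (fun r : ℝ => (r : ℂ))
        (Multiset.filter (fun x => x ≠ 0) ((univ : Finset (Fin n)).val.map hA.eigenvalues))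
      = Multiset.filter (fun x => x ≠ 0) A.charpoly.roots := by
  rw [roots_charpoly_hermitian hA]
  have : ((univ : Finset (Fin n)).val.map (fun i => (hA.eigenvalues i : ℂ)))
      = ((univ : Finset (Fin n)).val.map hA.eigenvalues).map (fun r : ℝ => (r : ℂ)) := by
    rw [Multiset.map_map]; rfl
  rw [this]
  simp only [Multiset.filter_map]
  refine congrArg _ (congrArg _ ?_)
  apply Multiset.filter_congr
  intro x _
  simp [Function.comp, Complex.ofReal_eq_zero]

end spectralFin

section pure
variable {n1 n2 : ℕ}

lemma matrix_eq_zero_of_rank_eq_zero {m : Type*} [Fintype m] {n : Type*} [Fintype n]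
    [DecidableEq n] (A : Matrix m n ℂ) (h : A.rank = 0) : A = 0 := by
  rw [Matrix.rank] at h
  have hr : LinearMap.range A.mulVecLin = ⊥ := Submodule.finrank_eq_zero.mp h
  rw [LinearMap.range_eq_bot] at hr
  ext i j
  have h2 : A *ᵥ Pi.single j 1 = 0 := by
    have := congrFun (congrArg DFunLike.coe hr) (Pi.single j 1)
    simpa using this
  have h3 := congrFun h2 i
  simpa [Matrix.mulVec_single] using h3

lemma pure_eq_mul (v : Fin n1 × Fin n2 → ℂ) :
    (Matrix.of fun p q => v p * (starRingEnd ℂ) (v q))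
      = Matrix.replicateCol Unit v * (Matrix.replicateCol Unit v)ᴴ := by
  ext p q
  simp [Matrix.mul_apply, Matrix.replicateCol_apply, Matrix.conjTranspose_apply]

lemma pure_posSemidef (v : Fin n1 × Fin n2 → ℂ) :
    (Matrix.of fun p q => v p * (starRingEnd ℂ) (v q)).PosSemidef := by
  rw [pure_eq_mul]
  exact posSemidef_self_mul_conjTranspose _

lemma pure_rank (v : Fin n1 × Fin n2 → ℂ) (hv : v ≠ 0) :
    (Matrix.of fun p q => v p * (starRingEnd ℂ) (v q)).rank = 1 := by
  rw [pure_eq_mul, rank_self_mul_conjTranspose]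
  have hle : (Matrix.replicateCol Unit v).rank ≤ 1 := by
    have := (Matrix.replicateCol Unit v).rank_le_card_width
    simpa using this
  have hne : (Matrix.replicateCol Unit v).rank ≠ 0 := by
    intro h0
    apply hv
    have := matrix_eq_zero_of_rank_eq_zero _ h0
    funext p
    have := congrFun (congrFun this p) ()
    simpa [Matrix.replicateCol_apply] using this
  omega

lemma trace_trace2 (ρ : Matrix (Fin n1 × Fin n2) (Fin n1 × Fin n2) ℂ) :
    (trace2 ρ).trace = ρ.trace := by
  simp only [Matrix.trace, trace2, Matrix.diag, Matrix.of_apply]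
  rw [Fintype.sum_prod_type]

lemma charpoly_transpose'' {n : ℕ} (A : Matrix (Fin n) (Fin n) ℂ) :
    Aᵀ.charpoly = A.charpoly := by
  rw [Matrix.charpoly, Matrix.charpoly]
  have h : charmatrix Aᵀ = (charmatrix A)ᵀ := by
    ext i j
    by_cases h : i = j
    · subst h
      simp [charmatrix_apply_eq]
    · simp [charmatrix_apply_ne _ _ _ h, charmatrix_apply_ne _ _ _ (Ne.symm h),
        Matrix.transpose_apply]
  rw [h, det_transpose]

end pure

lemma master {N M : ℕ} (s : Finset (Fin N)) (g : Fin N → Fin M)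
    (hginj : ∀ i ∈ s, ∀ j ∈ s, g i = g j → i = j)
    (U : Matrix (Fin M) (Fin M) ℂ)
    (horth : ∀ x y : Fin M, ∑ c : Fin M, (starRingEnd ℂ) (U c x) * U c y
      = if x = y then 1 else 0)
    (f h : Fin N → ℂ) :
    ∑ k : Fin M, (∑ i ∈ s, f i * U k (g i)) * (starRingEnd ℂ) (∑ j ∈ s, h j * U k (g j))
      = ∑ i ∈ s, f i * (starRingEnd ℂ) (h i) := by
  have step1 : ∀ k : Fin M,
      (∑ i ∈ s, f i * U k (g i)) * (starRingEnd ℂ) (∑ j ∈ s, h j * U k (g j))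
        = ∑ i ∈ s, ∑ j ∈ s, f i * (starRingEnd ℂ) (h j) * (U k (g i)
            * (starRingEnd ℂ) (U k (g j))) := by
    intro k
    rw [map_sum, Finset.sum_mul_sum]
    refine Finset.sum_congr rfl fun i _ => Finset.sum_congr rfl fun j _ => ?_
    rw [_root_.map_mul]
    ring
  rw [Finset.sum_congr rfl fun k _ => step1 k]
  rw [Finset.sum_comm]
  refine Finset.sum_congr rfl fun i hi => ?_
  rw [Finset.sum_comm]
  have step2 : ∀ j ∈ s, ∑ k : Fin M, f i * (starRingEnd ℂ) (h j)
      * (U k (g i) * (starRingEnd ℂ) (U k (g j)))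
        = f i * (starRingEnd ℂ) (h j) * (if g j = g i then 1 else 0) := by
    intro j _
    rw [← Finset.mul_sum]
    congr 1
    rw [← horth (g j) (g i)]
    exact Finset.sum_congr rfl fun k _ => mul_comm _ _
  rw [Finset.sum_congr rfl step2]
  rw [Finset.sum_eq_single_of_mem i hi
    (fun j hj hne => by rw [if_neg (fun hgeq => hne (hginj j hj i hi hgeq)), mul_zero])]
  rw [if_pos rfl, mul_one]


/-- There is a pure (rank-one) state in `S(ρ1, ρ2)` if and only if `ρ1` and `ρ2` are
isospectral, i.e. have the same nonzero eigenvalues counting multiplicities. -/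
theorem stmt18 {n1 n2 : ℕ}
    (ρ1 : Matrix (Fin n1) (Fin n1) ℂ) (ρ2 : Matrix (Fin n2) (Fin n2) ℂ)
    (hρ1 : ρ1.PosSemidef) (hρ1tr : ρ1.trace = 1)
    (hρ2 : ρ2.PosSemidef) (hρ2tr : ρ2.trace = 1) :
    (∃ ρ : Matrix (Fin n1 × Fin n2) (Fin n1 × Fin n2) ℂ,
        ρ.PosSemidef ∧ ρ.trace = 1 ∧ trace2 ρ = ρ1 ∧ trace1 ρ = ρ2 ∧ ρ.rank = 1) ↔
      Multiset.filter (fun x => x ≠ 0) (Finset.univ.val.map hρ1.1.eigenvalues) =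
        Multiset.filter (fun x => x ≠ 0) (Finset.univ.val.map hρ2.1.eigenvalues) := by
  constructor
  · rintro ⟨ρ, hPSD, htr, h2, h1, hrank⟩
    have hh := hPSD.1
    -- there is exactly one nonzero eigenvalue, and it is 1
    have hcard : Fintype.card {i // hh.eigenvalues i ≠ 0} = 1 := by
      rw [← hh.rank_eq_card_non_zero_eigs]; exact hrank
    obtain ⟨⟨j0, hj0⟩, huniq⟩ := Fintype.card_eq_one_iff.mp hcard
    have hzero : ∀ p, p ≠ j0 → hh.eigenvalues p = 0 := by
      intro p hp
      by_contra hne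
      exact hp (congrArg Subtype.val (huniq ⟨p, hne⟩))
    have hsum := (trace_eq_sum_eigs hh).symm.trans htr
    rw [Finset.sum_eq_single j0 (fun b _ hb => by rw [hzero b hb]; simp)
      (fun h => absurd (Finset.mem_univ j0) h)] at hsum
    set U : Matrix (Fin n1 × Fin n2) (Fin n1 × Fin n2) ℂ :=
      (hh.eigenvectorUnitary : Matrix (Fin n1 × Fin n2) (Fin n1 × Fin n2) ℂ) with hUdef
    have hρv : ∀ p q, ρ p q = U p j0 * (starRingEnd ℂ) (U q j0) := by
      intro p q
      rw [spectral_sum hh p q]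
      rw [Finset.sum_eq_single j0 (fun b _ hb => by rw [hzero b hb]; simp)
        (fun h => absurd (Finset.mem_univ j0) h), hsum, one_mul]
    set ψ : Matrix (Fin n1) (Fin n2) ℂ := Matrix.of fun a k => U (a, k) j0 with hψdef
    have hρ1ψ : ρ1 = ψ * ψᴴ := by
      rw [← h2]
      ext a b
      simp only [trace2, Matrix.of_apply, Matrix.mul_apply, Matrix.conjTranspose_apply,
        RCLike.star_def, hψdef]
      exact Finset.sum_congr rfl fun k _ => hρv (a, k) (b, k)
    have hρ2ψ : ρ2 = ψᵀ * ψᵀᴴ := by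
      rw [← h1]
      ext a b
      simp only [trace1, Matrix.of_apply, Matrix.mul_apply, Matrix.conjTranspose_apply,
        Matrix.transpose_apply, RCLike.star_def, hψdef]
      exact Finset.sum_congr rfl fun c _ => hρv (c, a) (c, b)
    have hT : ψᵀᴴ * ψᵀ = ρ1ᵀ := by
      rw [hρ1ψ]
      ext a b
      simp only [Matrix.mul_apply, Matrix.conjTranspose_apply, Matrix.transpose_apply,
        RCLike.star_def, Matrix.of_apply]
      exact Finset.sum_congr rfl fun c _ => mul_comm _ _
    have key := charpoly_mul_comm_rect ψᵀ ψᵀᴴ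
    rw [← hρ2ψ, hT, charpoly_transpose''] at key
    -- pass to roots
    have hch1 : ρ1.charpoly ≠ 0 := ρ1.charpoly_monic.ne_zero
    have hch2 : ρ2.charpoly ≠ 0 := ρ2.charpoly_monic.ne_zero
    have hX1 : (X : Polynomial ℂ) ^ n1 ≠ 0 := pow_ne_zero _ X_ne_zero
    have hX2 : (X : Polynomial ℂ) ^ n2 ≠ 0 := pow_ne_zero _ X_ne_zero
    have hr := congrArg Polynomial.roots key
    rw [Polynomial.roots_mul (mul_ne_zero hX1 hch2),
      Polynomial.roots_mul (mul_ne_zero hX2 hch1)] at hr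
    have hfilt := congrArg (Multiset.filter (fun x : ℂ => x ≠ 0)) hr
    have hXzero : ∀ m : ℕ, Multiset.filter (fun x : ℂ => x ≠ 0)
        ((X : Polynomial ℂ) ^ m).roots = 0 := by
      intro m
      rw [Polynomial.roots_pow, Polynomial.roots_X]
      rw [Multiset.filter_eq_nil]
      intro a ha
      have : a = 0 := by
        have := Multiset.mem_of_mem_nsmul ha
        simpa using this
      simp [this]
    rw [Multiset.filter_add, Multiset.filter_add, hXzero, hXzero, zero_add, zero_add] at hfilt
    apply Multiset.map_injective (f := fun r : ℝ => (r : ℂ)) Complex.ofReal_injective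
    rw [filter_roots_eq hρ1.1, filter_roots_eq hρ2.1]
    exact hfilt.symm
  · intro h
    have hn2 : 0 < n2 := by
      rcases Nat.eq_zero_or_pos n2 with h0 | h0
      · exfalso
        subst h0
        simp [Matrix.trace] at hρ2tr
      · exact h0
    set e1 : Fin n1 → ℝ := hρ1.1.eigenvalues with he1
    set e2 : Fin n2 → ℝ := hρ2.1.eigenvalues with he2
    set U1 : Matrix (Fin n1) (Fin n1) ℂ :=
      (hρ1.1.eigenvectorUnitary : Matrix (Fin n1) (Fin n1) ℂ) with hU1
    set U2 : Matrix (Fin n2) (Fin n2) ℂ :=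
      (hρ2.1.eigenvectorUnitary : Matrix (Fin n2) (Fin n2) ℂ) with hU2
    set s1 : Finset (Fin n1) := univ.filter (fun i => e1 i ≠ 0) with hs1
    set s2 : Finset (Fin n2) := univ.filter (fun j => e2 j ≠ 0) with hs2
    have hms : s1.val.map e1 = s2.val.map e2 := by
      rw [hs1, hs2, Finset.filter_val, Finset.filter_val]
      rw [Multiset.filter_map, Multiset.filter_map] at h
      exact h
    have hfib : ∀ r : ℝ, (s1.filter (fun i => r = e1 i)).card
        = (s2.filter (fun j => r = e2 j)).card := by
      intro r
      have hcnt : Multiset.count r (s1.val.map e1) = Multiset.count r (s2.val.map e2) := by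
        rw [hms]
      rw [Multiset.count_map, Multiset.count_map] at hcnt
      simpa [Finset.card, Finset.filter_val] using hcnt
    have hcardF : ∀ r : ℝ, Fintype.card {x // x ∈ s1.filter (fun i => r = e1 i)}
        = Fintype.card {y // y ∈ s2.filter (fun j => r = e2 j)} := by
      intro r
      rw [Fintype.card_coe, Fintype.card_coe]
      exact hfib r
    let E : (r : ℝ) → {x // x ∈ s1.filter (fun i => r = e1 i)}
        ≃ {y // y ∈ s2.filter (fun j => r = e2 j)} :=
      fun r => Fintype.equivOfCardEq (hcardF r)
    have hmem1 : ∀ i, i ∈ s1 → i ∈ s1.filter (fun k => e1 i = e1 k) :=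
      fun i hi => Finset.mem_filter.mpr ⟨hi, rfl⟩
    let τ : Fin n1 → Fin n2 := fun i =>
      if hi : i ∈ s1 then ((E (e1 i)) ⟨i, hmem1 i hi⟩ : _).1 else ⟨0, hn2⟩
    have hτval : ∀ i (hi : i ∈ s1), τ i = ((E (e1 i)) ⟨i, hmem1 i hi⟩).1 := by
      intro i hi
      simp only [τ, dif_pos hi]
    have hτmem : ∀ i (hi : i ∈ s1), τ i ∈ s2.filter (fun j => e1 i = e2 j) := by
      intro i hi
      rw [hτval i hi]
      exact ((E (e1 i)) ⟨i, hmem1 i hi⟩).2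
    have hτs2 : ∀ i ∈ s1, τ i ∈ s2 := fun i hi => (Finset.mem_filter.mp (hτmem i hi)).1
    have hτe : ∀ i ∈ s1, e2 (τ i) = e1 i :=
      fun i hi => ((Finset.mem_filter.mp (hτmem i hi)).2).symm
    have hval : ∀ (r r' : ℝ) (hrr : r = r') (k : Fin n1)
        (hk : k ∈ s1.filter (fun x => r = e1 x)) (hk' : k ∈ s1.filter (fun x => r' = e1 x)),
        ((E r) ⟨k, hk⟩).1 = ((E r') ⟨k, hk'⟩).1 := by
      rintro r r' rfl k hk hk'
      rfl
    have hτinj : ∀ i ∈ s1, ∀ j ∈ s1, τ i = τ j → i = j := by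
      intro i hi j hj hij
      have hee : e1 i = e1 j := by
        rw [← hτe i hi, ← hτe j hj, hij]
      have hj' : j ∈ s1.filter (fun x => e1 i = e1 x) := Finset.mem_filter.mpr ⟨hj, hee⟩
      have hkey : ((E (e1 i)) ⟨i, hmem1 i hi⟩).1 = ((E (e1 i)) ⟨j, hj'⟩).1 := by
        rw [← hval (e1 j) (e1 i) hee.symm j (hmem1 j hj) hj', ← hτval i hi, ← hτval j hj]
        exact hij
      have := (E (e1 i)).injective (Subtype.ext hkey)
      exact congrArg Subtype.val this
    have hτsurj : ∀ j ∈ s2, ∃ i, ∃ hi : i ∈ s1, τ i = j := by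
      intro j hj
      have hjF : j ∈ s2.filter (fun y => e2 j = e2 y) := Finset.mem_filter.mpr ⟨hj, rfl⟩
      obtain ⟨⟨i, hiF⟩, hEi⟩ := (E (e2 j)).surjective ⟨j, hjF⟩
      have hi1 : i ∈ s1 := (Finset.mem_filter.mp hiF).1
      have hei : e2 j = e1 i := (Finset.mem_filter.mp hiF).2
      refine ⟨i, hi1, ?_⟩
      rw [hτval i hi1, hval (e1 i) (e2 j) hei.symm i (hmem1 i hi1) hiF]
      exact congrArg Subtype.val hEi
    -- the pure state
    set v : Fin n1 × Fin n2 → ℂ := fun p =>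
      ∑ i ∈ s1, ((Real.sqrt (e1 i) : ℂ) * U1 p.1 i) * U2 p.2 (τ i) with hvdef
    set ρ : Matrix (Fin n1 × Fin n2) (Fin n1 × Fin n2) ℂ :=
      Matrix.of fun p q => v p * (starRingEnd ℂ) (v q) with hρdef
    have hsq : ∀ i ∈ s1, ((Real.sqrt (e1 i) : ℂ) * (starRingEnd ℂ) (Real.sqrt (e1 i) : ℂ))
        = (e1 i : ℂ) := by
      intro i _
      rw [Complex.conj_ofReal, ← Complex.ofReal_mul,
        Real.mul_self_sqrt (hρ1.eigenvalues_nonneg i)]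
    -- marginals
    have hmarg1 : trace2 ρ = ρ1 := by
      ext a b
      show ∑ k : Fin n2, v (a, k) * (starRingEnd ℂ) (v (b, k)) = ρ1 a b
      have hmas := master s1 τ hτinj U2 (fun x y => orth_cols hρ2.1 x y)
        (fun i => (Real.sqrt (e1 i) : ℂ) * U1 a i)
        (fun i => (Real.sqrt (e1 i) : ℂ) * U1 b i)
      rw [hvdef] at *
      rw [hmas]
      have : ∀ i ∈ s1, ((Real.sqrt (e1 i) : ℂ) * U1 a i)
          * (starRingEnd ℂ) ((Real.sqrt (e1 i) : ℂ) * U1 b i)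
          = (e1 i : ℂ) * (U1 a i * (starRingEnd ℂ) (U1 b i)) := by
        intro i hi
        rw [_root_.map_mul, Complex.conj_ofReal]
        have hss : (Real.sqrt (e1 i) : ℂ) * (Real.sqrt (e1 i) : ℂ) = (e1 i : ℂ) := by
          rw [← Complex.ofReal_mul, Real.mul_self_sqrt (hρ1.eigenvalues_nonneg i)]
        linear_combination (U1 a i * (starRingEnd ℂ) (U1 b i)) * hss
      rw [Finset.sum_congr rfl this]
      rw [spectral_sum hρ1.1 a b]
      refine Finset.sum_subset (Finset.filter_subset _ _) ?_
      intro i _ hni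
      have : e1 i = 0 := by
        by_contra hne
        exact hni (Finset.mem_filter.mpr ⟨Finset.mem_univ i, hne⟩)
      rw [this]
      simp
    have hmarg2 : trace1 ρ = ρ2 := by
      ext a b
      show ∑ c : Fin n1, v (c, a) * (starRingEnd ℂ) (v (c, b)) = ρ2 a b
      have hvre : ∀ (x : Fin n2) (c : Fin n1), v (c, x)
          = ∑ i ∈ s1, ((Real.sqrt (e1 i) : ℂ) * U2 x (τ i)) * U1 c i := by
        intro x c
        rw [hvdef]
        exact Finset.sum_congr rfl fun i _ => by ring
      simp_rw [hvre]
      have hmas := master s1 id (fun i _ j _ hij => hij) U1 (fun x y => orth_cols hρ1.1 x y)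
        (fun i => (Real.sqrt (e1 i) : ℂ) * U2 a (τ i))
        (fun i => (Real.sqrt (e1 i) : ℂ) * U2 b (τ i))
      simp only [id_eq] at hmas
      rw [hmas]
      have hterm : ∀ i ∈ s1, ((Real.sqrt (e1 i) : ℂ) * U2 a (τ i))
          * (starRingEnd ℂ) ((Real.sqrt (e1 i) : ℂ) * U2 b (τ i))
          = (e2 (τ i) : ℂ) * (U2 a (τ i) * (starRingEnd ℂ) (U2 b (τ i))) := by
        intro i hi
        rw [_root_.map_mul, Complex.conj_ofReal, hτe i hi]
        have hss : (Real.sqrt (e1 i) : ℂ) * (Real.sqrt (e1 i) : ℂ) = (e1 i : ℂ) := by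
          rw [← Complex.ofReal_mul, Real.mul_self_sqrt (hρ1.eigenvalues_nonneg i)]
        linear_combination (U2 a (τ i) * (starRingEnd ℂ) (U2 b (τ i))) * hss
      rw [Finset.sum_congr rfl hterm]
      have hbij : ∑ i ∈ s1, (e2 (τ i) : ℂ) * (U2 a (τ i) * (starRingEnd ℂ) (U2 b (τ i)))
          = ∑ j ∈ s2, (e2 j : ℂ) * (U2 a j * (starRingEnd ℂ) (U2 b j)) := by
        refine Finset.sum_bij (fun i hi => τ i) hτs2 hτinj ?_ ?_
        · intro j hj
          obtain ⟨i, hi, hij⟩ := hτsurj j hj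
          exact ⟨i, hi, hij⟩
        · intro i hi
          rfl
      rw [hbij, spectral_sum hρ2.1 a b]
      refine Finset.sum_subset (Finset.filter_subset _ _) ?_
      intro j _ hnj
      have : e2 j = 0 := by
        by_contra hne
        exact hnj (Finset.mem_filter.mpr ⟨Finset.mem_univ j, hne⟩)
      rw [this]
      simp
    have htrρ : ρ.trace = 1 := by
      rw [← trace_trace2, hmarg1, hρ1tr]
    have hvne : v ≠ 0 := by
      intro hv0
      rw [hρdef, hv0] at htrρ
      simp [Matrix.trace, Matrix.diag] at htrρ
    refine ⟨ρ, ?_, htrρ, hmarg1, hmarg2, ?_⟩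
    · rw [hρdef]
      exact pure_posSemidef v
    · rw [hρdef]
      exact pure_rank v hvne
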